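/- Let A be a finite directed graph and suppose (F, D) is a finite homomorphism duality with F = {A}, i.e., for every finite directed graph C: A → C if and only if C ↛ D for every D ∈ 𝒟. Then the class [A] of graphs homomorphically equivalent to A admits a right query algorithm over the Boolean semiring. -/
import Mathlib


def IsHom {α β : Type} (E : α → α → Prop) (F : β → β → Prop) (f : α → β) : Prop :=
  ∀ a b, E a b → F (f a) (f b)

structure FinDigraph where
  V : Type
  [fin : Fintype V]
  E : V → V → Prop

attribute [instance] FinDigraph.fin

def HomExists (A B : FinDigraph) : Prop :=
  ∃ f : A.V → B.V, IsHom A.E B.E f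

def HomEquiv (A B : FinDigraph) : Prop :=
  HomExists A B ∧ HomExists B A

/-- The Boolean left profile of `D` with respect to the list of graphs `F`. -/
def leftProfileB {k : ℕ} (F : Fin k → FinDigraph) (D : FinDigraph) : Fin k → Prop :=
  fun i => HomExists (F i) D

/-- A class of finite digraphs admits a left query algorithm over the Boolean semiring. -/
def AdmitsLeftB (C : Set FinDigraph) : Prop :=
  ∃ (k : ℕ) (F : Fin k → FinDigraph) (X : Set (Fin k → Prop)),
    ∀ D : FinDigraph, D ∈ C ↔ leftProfileB F D ∈ X

/-- The Boolean right profile of a graph with respect to a list of graphs. -/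
def rightProfileB {k : ℕ} (F : Fin k → FinDigraph) (B : FinDigraph) : Fin k → Prop :=
  fun i => HomExists B (F i)

def AdmitsRightB (C : Set FinDigraph) : Prop :=
  ∃ (k : ℕ) (F : Fin k → FinDigraph) (X : Set (Fin k → Prop)),
    ∀ B : FinDigraph, B ∈ C ↔ rightProfileB F B ∈ X

theorem duality_implies_homtype_rightB (A : FinDigraph) (m : ℕ)
    (𝒟 : Fin m → FinDigraph)
    (hdual : ∀ C : FinDigraph, HomExists A C ↔ ∀ j, ¬ HomExists C (𝒟 j)) :
    AdmitsRightB {B : FinDigraph | HomEquiv A B} := by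
  refine ⟨m + 1, Fin.cons A 𝒟, {p | p 0 ∧ ∀ j : Fin m, ¬ p j.succ}, fun B => ?_⟩
  simp only [Set.mem_setOf_eq, rightProfileB, Fin.cons_zero, Fin.cons_succ]
  constructor
  · rintro ⟨hAB, hBA⟩
    exact ⟨hBA, (hdual B).mp hAB⟩
  · rintro ⟨hBA, hD⟩
    exact ⟨(hdual B).mpr hD, hBA⟩
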